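/- Let A ∈ ℝ^{q×q}, C ∈ ℝ^{p×q}, G ∈ ℝ^{q×k}, Q ∈ ℝ^{k×k} symmetric positive semidefinite, S ∈ ℝ^{k×p}, and R ∈ ℝ^{p×p} symmetric positive definite. Set A* = A − G·S·R⁻¹·C and B* = Q − S·R⁻¹·Sᵀ, and assume B* is positive semidefinite with square root B*^{1/2}. If the pair {A, C} is detectable and the pair {A*, G·B*^{1/2}} is stabilizable, then: for every symmetric positive semidefinite initial condition P_1, the generalized matrix difference Riccati recursion P_{t+1} = A·P_t·Aᵀ + G·Q·Gᵀ − (A·P_t·Cᵀ + G·S)·(R + C·P_t·Cᵀ)⁻¹·(A·P_t·Cᵀ + G·S)ᵀ is well defined (R + C·P_t·Cᵀ is positive definite for all t), and P_n converges as n → ∞ to a symmetric positive semidefinite matrix P which is the unique positive semidefinite solution of the algebraic Riccati equation P = A·P·Aᵀ + G·Q·Gᵀ − (A·P·Cᵀ + G·S)·(R + C·P·Cᵀ)⁻¹·(A·P·Cᵀ + G·S)ᵀ, and P is stabilizing, i.e. every complex eigenvalue of A − (A·P·Cᵀ + G·S)·(R + C·P·Cᵀ)⁻¹·C has modulus strictly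 less than 1. -/

import Mathlib

open Matrix Filter
open scoped Topology ENNReal NNReal
namespace Stmt17

variable {q p k : ℕ}

noncomputable def rT (C : Matrix (Fin p) (Fin q) ℝ) (R : Matrix (Fin p) (Fin p) ℝ)
    (P : Matrix (Fin q) (Fin q) ℝ) : Matrix (Fin p) (Fin p) ℝ := R + C * P * Cᵀ

noncomputable def rM (A : Matrix (Fin q) (Fin q) ℝ) (C : Matrix (Fin p) (Fin q) ℝ)
    (G : Matrix (Fin q) (Fin k) ℝ) (S : Matrix (Fin k) (Fin p) ℝ)
    (P : Matrix (Fin q) (Fin q) ℝ) : Matrix (Fin q) (Fin p) ℝ := A * P * Cᵀ + G * S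

noncomputable def rf (A : Matrix (Fin q) (Fin q) ℝ) (C : Matrix (Fin p) (Fin q) ℝ)
    (G : Matrix (Fin q) (Fin k) ℝ) (Q : Matrix (Fin k) (Fin k) ℝ)
    (S : Matrix (Fin k) (Fin p) ℝ) (R : Matrix (Fin p) (Fin p) ℝ)
    (P : Matrix (Fin q) (Fin q) ℝ) : Matrix (Fin q) (Fin q) ℝ :=
  A * P * Aᵀ + G * Q * Gᵀ - rM A C G S P * (rT C R P)⁻¹ * (rM A C G S P)ᵀ

noncomputable def rL (A : Matrix (Fin q) (Fin q) ℝ) (C : Matrix (Fin p) (Fin q) ℝ)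
    (G : Matrix (Fin q) (Fin k) ℝ) (S : Matrix (Fin k) (Fin p) ℝ) (R : Matrix (Fin p) (Fin p) ℝ)
    (P : Matrix (Fin q) (Fin q) ℝ) : Matrix (Fin q) (Fin p) ℝ := rM A C G S P * (rT C R P)⁻¹

noncomputable def rGam (G : Matrix (Fin q) (Fin k) ℝ) (Q : Matrix (Fin k) (Fin k) ℝ)
    (S : Matrix (Fin k) (Fin p) ℝ) (R : Matrix (Fin p) (Fin p) ℝ)
    (L : Matrix (Fin q) (Fin p) ℝ) : Matrix (Fin q) (Fin q) ℝ :=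
  G * Q * Gᵀ - G * S * Lᵀ - L * Sᵀ * Gᵀ + L * R * Lᵀ

noncomputable def rg (A : Matrix (Fin q) (Fin q) ℝ) (C : Matrix (Fin p) (Fin q) ℝ)
    (G : Matrix (Fin q) (Fin k) ℝ) (Q : Matrix (Fin k) (Fin k) ℝ)
    (S : Matrix (Fin k) (Fin p) ℝ) (R : Matrix (Fin p) (Fin p) ℝ)
    (P : Matrix (Fin q) (Fin q) ℝ) (L : Matrix (Fin q) (Fin p) ℝ) : Matrix (Fin q) (Fin q) ℝ :=
  (A - L * C) * P * (A - L * C)ᵀ + rGam G Q S R L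

lemma herm_transpose {n : ℕ} {X : Matrix (Fin n) (Fin n) ℝ} (h : X.IsHermitian) : Xᵀ = X := by
  rw [← Matrix.conjTranspose_eq_transpose_of_trivial]; exact h.eq

section Basic
variable {A : Matrix (Fin q) (Fin q) ℝ} {C : Matrix (Fin p) (Fin q) ℝ}
  {G : Matrix (Fin q) (Fin k) ℝ} {Q : Matrix (Fin k) (Fin k) ℝ}
  {S : Matrix (Fin k) (Fin p) ℝ} {R : Matrix (Fin p) (Fin p) ℝ}

lemma posDef_rT (hR : R.PosDef) {P : Matrix (Fin q) (Fin q) ℝ} (hP : P.PosSemidef) :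
    (rT C R P).PosDef := by
  have h1 : (C * P * Cᵀ).PosSemidef := by
    simpa [Matrix.conjTranspose_eq_transpose_of_trivial] using hP.mul_mul_conjTranspose_same C
  exact hR.add_posSemidef h1

lemma rT_isUnit_det (hR : R.PosDef) {P : Matrix (Fin q) (Fin q) ℝ} (hP : P.PosSemidef) :
    IsUnit (rT C R P).det :=
  isUnit_iff_ne_zero.2 (ne_of_gt (posDef_rT hR hP).det_pos)

lemma rT_transpose (hR : R.PosDef) {P : Matrix (Fin q) (Fin q) ℝ} (hP : P.PosSemidef) :
    (rT C R P)ᵀ = rT C R P :=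
  herm_transpose (posDef_rT hR hP).isHermitian

lemma rT_inv_transpose (hR : R.PosDef) {P : Matrix (Fin q) (Fin q) ℝ} (hP : P.PosSemidef) :
    ((rT C R P)⁻¹)ᵀ = (rT C R P)⁻¹ := by
  rw [Matrix.transpose_nonsing_inv, rT_transpose hR hP]

/-- The completion-of-squares identity. -/
lemma rg_eq_rf_add (hR : R.PosDef) {P : Matrix (Fin q) (Fin q) ℝ} (hP : P.PosSemidef)
    (L : Matrix (Fin q) (Fin p) ℝ) :
    rg A C G Q S R P L = rf A C G Q S R P
      + (L - rL A C G S R P) * rT C R P * (L - rL A C G S R P)ᵀ := by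
  have hPt : Pᵀ = P := herm_transpose hP.isHermitian
  have hRt : Rᵀ = R := herm_transpose hR.isHermitian
  set T := rT C R P with hTdef
  set M := rM A C G S P with hMdef
  set J := T⁻¹ with hJdef
  have hJT : J * T = 1 := Matrix.nonsing_inv_mul T (rT_isUnit_det hR hP)
  have hTJ : T * J = 1 := Matrix.mul_nonsing_inv T (rT_isUnit_det hR hP)
  have hJsym : Jᵀ = J := rT_inv_transpose hR hP
  show (A - L * C) * P * (A - L * C)ᵀ + (G * Q * Gᵀ - G * S * Lᵀ - L * Sᵀ * Gᵀ + L * R * Lᵀ)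
      = (A * P * Aᵀ + G * Q * Gᵀ - M * J * Mᵀ) + (L - M * J) * T * (L - M * J)ᵀ
  have h1 : M * J * T = M := by rw [Matrix.mul_assoc, hJT, Matrix.mul_one]
  have hquad : (L - M * J) * T * (L - M * J)ᵀ
      = L * T * Lᵀ - L * Mᵀ - M * Lᵀ + M * J * Mᵀ := by
    rw [Matrix.transpose_sub, Matrix.transpose_mul, hJsym, Matrix.sub_mul, Matrix.sub_mul,
      Matrix.mul_sub, Matrix.mul_sub, h1]
    have h2 : L * T * (J * Mᵀ) = L * Mᵀ := by
      rw [Matrix.mul_assoc L T, ← Matrix.mul_assoc T, hTJ, Matrix.one_mul]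
    rw [h2]
    simp only [Matrix.mul_assoc]
    abel
  rw [hquad, hTdef, hMdef, rT, rM]
  simp only [Matrix.transpose_mul, Matrix.transpose_add, Matrix.transpose_sub,
    Matrix.transpose_transpose, hPt, hRt, Matrix.mul_add, Matrix.add_mul, Matrix.mul_sub,
    Matrix.sub_mul, Matrix.mul_assoc]
  abel

lemma rf_eq_rg (hR : R.PosDef) {P : Matrix (Fin q) (Fin q) ℝ} (hP : P.PosSemidef) :
    rf A C G Q S R P = rg A C G Q S R P (rL A C G S R P) := by
  rw [rg_eq_rf_add hR hP, sub_self, Matrix.zero_mul, Matrix.zero_mul, add_zero]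

/-- Difference-of-Riccati identity. -/
lemma rf_diff (hR : R.PosDef) {P1 P2 : Matrix (Fin q) (Fin q) ℝ}
    (hP1 : P1.PosSemidef) (hP2 : P2.PosSemidef) :
    rf A C G Q S R P1 - rf A C G Q S R P2
      = (A - rL A C G S R P1 * C) * (P1 - P2) * (A - rL A C G S R P2 * C)ᵀ := by
  have hP1t : P1ᵀ = P1 := herm_transpose hP1.isHermitian
  have hP2t : P2ᵀ = P2 := herm_transpose hP2.isHermitian
  set T1 := rT C R P1 with hT1def
  set T2 := rT C R P2 with hT2def
  set M1 := rM A C G S P1 with hM1def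
  set M2 := rM A C G S P2 with hM2def
  set J1 := T1⁻¹ with hJ1def
  set J2 := T2⁻¹ with hJ2def
  have hJ1T : J1 * T1 = 1 := Matrix.nonsing_inv_mul T1 (rT_isUnit_det hR hP1)
  have hT2J : T2 * J2 = 1 := Matrix.mul_nonsing_inv T2 (rT_isUnit_det hR hP2)
  have hJ2s : J2ᵀ = J2 := rT_inv_transpose hR hP2
  show (A * P1 * Aᵀ + G * Q * Gᵀ - M1 * J1 * M1ᵀ) - (A * P2 * Aᵀ + G * Q * Gᵀ - M2 * J2 * M2ᵀ)
      = (A - M1 * J1 * C) * (P1 - P2) * (A - M2 * J2 * C)ᵀ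
  have r1 : ∀ X : Matrix (Fin p) (Fin q) ℝ, C * (P1 * (Cᵀ * X)) = T1 * X - R * X := by
    intro X
    rw [hT1def, rT, Matrix.add_mul, ← Matrix.mul_assoc, ← Matrix.mul_assoc,
      Matrix.mul_assoc (C * P1)]
    abel
  have r2 : ∀ X : Matrix (Fin p) (Fin q) ℝ, C * (P2 * (Cᵀ * X)) = T2 * X - R * X := by
    intro X
    rw [hT2def, rT, Matrix.add_mul, ← Matrix.mul_assoc, ← Matrix.mul_assoc,
      Matrix.mul_assoc (C * P2)]
    abel
  have r3 : ∀ X : Matrix (Fin p) (Fin q) ℝ, A * (P1 * (Cᵀ * X)) = M1 * X - G * (S * X) := by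
    intro X
    rw [hM1def, rM, Matrix.add_mul, ← Matrix.mul_assoc, ← Matrix.mul_assoc,
      Matrix.mul_assoc (A * P1), Matrix.mul_assoc G]
    abel
  have r4 : ∀ X : Matrix (Fin p) (Fin q) ℝ, A * (P2 * (Cᵀ * X)) = M2 * X - G * (S * X) := by
    intro X
    rw [hM2def, rM, Matrix.add_mul, ← Matrix.mul_assoc, ← Matrix.mul_assoc,
      Matrix.mul_assoc (A * P2), Matrix.mul_assoc G]
    abel
  have r5 : C * (P1 * Aᵀ) = M1ᵀ - Sᵀ * Gᵀ := by
    rw [hM1def, rM]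
    simp only [Matrix.transpose_add, Matrix.transpose_mul, Matrix.transpose_transpose, hP1t,
      Matrix.mul_assoc]
    abel
  have r6 : C * (P2 * Aᵀ) = M2ᵀ - Sᵀ * Gᵀ := by
    rw [hM2def, rM]
    simp only [Matrix.transpose_add, Matrix.transpose_mul, Matrix.transpose_transpose, hP2t,
      Matrix.mul_assoc]
    abel
  have r7 : ∀ X : Matrix (Fin p) (Fin q) ℝ, J1 * (T1 * X) = X := by
    intro X; rw [← Matrix.mul_assoc, hJ1T, Matrix.one_mul]
  have r8 : ∀ X : Matrix (Fin p) (Fin q) ℝ, T2 * (J2 * X) = X := by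
    intro X; rw [← Matrix.mul_assoc, hT2J, Matrix.one_mul]
  simp only [Matrix.transpose_sub, Matrix.transpose_mul, hJ2s, Matrix.mul_sub, Matrix.sub_mul,
    Matrix.mul_assoc, r1, r2, r3, r4, r5, r6, r7, r8]
  abel

lemma psd_conj {m n : ℕ} {X : Matrix (Fin n) (Fin n) ℝ} (hX : X.PosSemidef)
    (N : Matrix (Fin m) (Fin n) ℝ) : (N * X * Nᵀ).PosSemidef := by
  simpa [Matrix.conjTranspose_eq_transpose_of_trivial] using hX.mul_mul_conjTranspose_same N

lemma psd_self_mul {m n : ℕ} (N : Matrix (Fin m) (Fin n) ℝ) : (N * Nᵀ).PosSemidef := by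
  simpa [Matrix.conjTranspose_eq_transpose_of_trivial] using
    Matrix.posSemidef_self_mul_conjTranspose N

lemma rGam_decomp {Bhalf : Matrix (Fin k) (Fin k) ℝ} (hR : R.PosDef)
    (hBhalf : Bhalf * Bhalfᵀ = Q - S * R⁻¹ * Sᵀ) (L : Matrix (Fin q) (Fin p) ℝ) :
    rGam G Q S R L
      = (G * Bhalf) * (G * Bhalf)ᵀ + (G * S * R⁻¹ - L) * R * (G * S * R⁻¹ - L)ᵀ := by
  have hdet : IsUnit R.det := isUnit_iff_ne_zero.2 (ne_of_gt hR.det_pos)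
  have hRt : Rᵀ = R := herm_transpose hR.isHermitian
  have hRit : R⁻¹ᵀ = R⁻¹ := by rw [Matrix.transpose_nonsing_inv, hRt]
  have ra : ∀ X : Matrix (Fin p) (Fin q) ℝ, R⁻¹ * (R * X) = X := by
    intro X; rw [← Matrix.mul_assoc, Matrix.nonsing_inv_mul R hdet, Matrix.one_mul]
  have rb : ∀ X : Matrix (Fin p) (Fin q) ℝ, R * (R⁻¹ * X) = X := by
    intro X; rw [← Matrix.mul_assoc, Matrix.mul_nonsing_inv R hdet, Matrix.one_mul]
  have rc : Bhalf * (Bhalfᵀ * Gᵀ) = Q * Gᵀ - S * (R⁻¹ * (Sᵀ * Gᵀ)) := by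
    rw [← Matrix.mul_assoc, hBhalf, Matrix.sub_mul]
    simp only [Matrix.mul_assoc]
  rw [rGam]
  simp only [Matrix.transpose_sub, Matrix.transpose_mul, hRit, Matrix.mul_sub, Matrix.sub_mul,
    Matrix.mul_assoc, ra, rb, rc]
  abel

lemma rGam_posSemidef {Bhalf : Matrix (Fin k) (Fin k) ℝ} (hR : R.PosDef)
    (hBhalf : Bhalf * Bhalfᵀ = Q - S * R⁻¹ * Sᵀ) (L : Matrix (Fin q) (Fin p) ℝ) :
    (rGam G Q S R L).PosSemidef := by
  rw [rGam_decomp hR hBhalf L]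
  exact (psd_self_mul _).add (psd_conj hR.posSemidef _)

lemma rg_posSemidef {Bhalf : Matrix (Fin k) (Fin k) ℝ} (hR : R.PosDef)
    (hBhalf : Bhalf * Bhalfᵀ = Q - S * R⁻¹ * Sᵀ) {P : Matrix (Fin q) (Fin q) ℝ}
    (hP : P.PosSemidef) (L : Matrix (Fin q) (Fin p) ℝ) : (rg A C G Q S R P L).PosSemidef :=
  (psd_conj hP _).add (rGam_posSemidef hR hBhalf L)

lemma rf_posSemidef {Bhalf : Matrix (Fin k) (Fin k) ℝ} (hR : R.PosDef)
    (hBhalf : Bhalf * Bhalfᵀ = Q - S * R⁻¹ * Sᵀ) {P : Matrix (Fin q) (Fin q) ℝ}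
    (hP : P.PosSemidef) : (rf A C G Q S R P).PosSemidef := by
  rw [rf_eq_rg hR hP]
  exact rg_posSemidef hR hBhalf hP _

/-- `rg P L - rf P` is PSD. -/
lemma rg_sub_rf (hR : R.PosDef) {P : Matrix (Fin q) (Fin q) ℝ} (hP : P.PosSemidef)
    (L : Matrix (Fin q) (Fin p) ℝ) :
    (rg A C G Q S R P L - rf A C G Q S R P).PosSemidef := by
  rw [rg_eq_rf_add hR hP L, add_sub_cancel_left]
  exact psd_conj (posDef_rT hR hP).posSemidef _

lemma rg_diff (L : Matrix (Fin q) (Fin p) ℝ) (P1 P2 : Matrix (Fin q) (Fin q) ℝ) :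
    rg A C G Q S R P2 L - rg A C G Q S R P1 L
      = (A - L * C) * (P2 - P1) * (A - L * C)ᵀ := by
  rw [rg, rg]
  simp only [Matrix.mul_sub, Matrix.sub_mul]
  abel

lemma rg_mono {P1 P2 : Matrix (Fin q) (Fin q) ℝ} (h12 : (P2 - P1).PosSemidef)
    (L : Matrix (Fin q) (Fin p) ℝ) :
    (rg A C G Q S R P2 L - rg A C G Q S R P1 L).PosSemidef := by
  rw [rg_diff]
  exact psd_conj h12 _

lemma rf_mono (hR : R.PosDef) {P1 P2 : Matrix (Fin q) (Fin q) ℝ}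
    (hP1 : P1.PosSemidef) (hP2 : P2.PosSemidef) (h12 : (P2 - P1).PosSemidef) :
    (rf A C G Q S R P2 - rf A C G Q S R P1).PosSemidef := by
  have key : rf A C G Q S R P2 - rf A C G Q S R P1
      = (rg A C G Q S R P2 (rL A C G S R P2) - rg A C G Q S R P1 (rL A C G S R P2))
        + (rg A C G Q S R P1 (rL A C G S R P2) - rf A C G Q S R P1) := by
    rw [← rf_eq_rg hR hP2]; abel
  rw [key]
  exact (rg_mono h12 _).add (rg_sub_rf hR hP1 _)

end Basic

section Spectral



lemma eigen_mem_spectrum {N : Matrix (Fin n) (Fin n) ℂ} {z : ℂ} {x : Fin n → ℂ}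
    (hx : x ≠ 0) (h : Nᵀ *ᵥ x = z • x) : z ∈ spectrum ℂ N := by
  rw [spectrum.mem_iff]
  intro hU
  rw [Matrix.isUnit_iff_isUnit_det] at hU
  have hdet : (algebraMap ℂ (Matrix (Fin n) (Fin n) ℂ) z - N).det
      = (algebraMap ℂ (Matrix (Fin n) (Fin n) ℂ) z - Nᵀ).det := by
    rw [← Matrix.det_transpose, Matrix.transpose_sub, Algebra.algebraMap_eq_smul_one,
      Matrix.transpose_smul, Matrix.transpose_one, ← Algebra.algebraMap_eq_smul_one]
  have hker : (algebraMap ℂ (Matrix (Fin n) (Fin n) ℂ) z - Nᵀ).det = 0 := by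
    rw [← Matrix.exists_mulVec_eq_zero_iff]
    refine ⟨x, hx, ?_⟩
    rw [Matrix.sub_mulVec, h, Algebra.algebraMap_eq_smul_one, Matrix.smul_mulVec,
      Matrix.one_mulVec, sub_self]
  rw [hdet, hker] at hU
  exact (isUnit_iff_ne_zero.mp hU) rfl

lemma spectrum_exists_eigen {N : Matrix (Fin n) (Fin n) ℂ} {z : ℂ}
    (hz : z ∈ spectrum ℂ N) : ∃ x : Fin n → ℂ, x ≠ 0 ∧ Nᵀ *ᵥ x = z • x := by
  rw [spectrum.mem_iff] at hz
  rw [Matrix.isUnit_iff_isUnit_det, isUnit_iff_ne_zero, not_not] at hz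
  have hdet : (algebraMap ℂ (Matrix (Fin n) (Fin n) ℂ) z - Nᵀ).det = 0 := by
    rw [← Matrix.det_transpose] at hz
    rw [← hz]
    congr 1
    rw [Matrix.transpose_sub, Algebra.algebraMap_eq_smul_one, Matrix.transpose_smul,
      Matrix.transpose_one, ← Algebra.algebraMap_eq_smul_one]
  rw [← Matrix.exists_mulVec_eq_zero_iff] at hdet
  obtain ⟨x, hx, hx0⟩ := hdet
  refine ⟨x, hx, ?_⟩
  rw [Matrix.sub_mulVec, Algebra.algebraMap_eq_smul_one, Matrix.smul_mulVec,
    Matrix.one_mulVec, sub_eq_zero] at hx0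
  exact hx0.symm


section Stability
attribute [local instance] Matrix.linftyOpNormedAddCommGroup Matrix.linftyOpNormedRing
  Matrix.linftyOpNormedAlgebra

lemma entry_norm_le {n : ℕ} (X : Matrix (Fin n) (Fin n) ℂ) (i j : Fin n) : ‖X i j‖ ≤ ‖X‖ := by
  rw [Matrix.linfty_opNorm_def]
  have h1 : ‖X i j‖₊ ≤ ∑ j' : Fin n, ‖X i j'‖₊ :=
    Finset.single_le_sum (f := fun j' => ‖X i j'‖₊) (fun _ _ => zero_le) (Finset.mem_univ j)
  have h2 : (∑ j' : Fin n, ‖X i j'‖₊) ≤ (Finset.univ : Finset (Fin n)).sup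
      fun i : Fin n => ∑ j' : Fin n, ‖X i j'‖₊ := Finset.le_sup (f := fun i : Fin n => ∑ j' : Fin n, ‖X i j'‖₊) (Finset.mem_univ i)
  exact_mod_cast h1.trans h2

lemma stable_norm_bound {n : ℕ} (M : Matrix (Fin n) (Fin n) ℝ)
    (h : ∀ z ∈ spectrum ℂ (M.map (Complex.ofReal : ℝ → ℂ)), ‖z‖ < 1) :
    ∃ c ρ : ℝ, 0 ≤ c ∧ 0 ≤ ρ ∧ ρ < 1 ∧ ∀ (t : ℕ) (i j : Fin n), |(M ^ t) i j| ≤ c * ρ ^ t := by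
  cases isEmpty_or_nonempty (Fin n) with
  | inl hemp => exact ⟨0, 0, le_refl _, le_refl _, by norm_num, fun t i => isEmptyElim i⟩
  | inr hne =>
    have : CompleteSpace (Matrix (Fin n) (Fin n) ℂ) :=
      FiniteDimensional.complete ℂ _
    have : Nontrivial (Matrix (Fin n) (Fin n) ℂ) := by
      refine ⟨0, 1, fun h01 => ?_⟩
      have := congr_fun (congr_fun h01 (Classical.arbitrary _)) (Classical.arbitrary _)
      simp [Matrix.one_apply_eq] at this
    set Mc := M.map (Complex.ofReal : ℝ → ℂ) with hMc
    have hrad : spectralRadius ℂ Mc < 1 := by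
      have := spectrum.spectralRadius_lt_of_forall_lt Mc (r := 1) (fun z hz => by
        have hz1 : ‖z‖ < 1 := by simpa using h z hz
        rw [← NNReal.coe_lt_coe]
        simpa using hz1)
      simpa using this
    obtain ⟨re, hre1, hre2⟩ := exists_between hrad
    have hgel := spectrum.pow_nnnorm_pow_one_div_tendsto_nhds_spectralRadius Mc
    have hev : ∀ᶠ t : ℕ in atTop, ((‖Mc ^ t‖₊ : ℝ≥0∞) ^ (1 / (t : ℝ))) < re :=
      hgel.eventually_lt_const hre1
    obtain ⟨N0, hN0⟩ := Filter.eventually_atTop.mp hev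
    have hre_ne_top : re ≠ ⊤ := (hre2.trans ENNReal.one_lt_top).ne
    set ρr : ℝ := re.toReal with hρr
    have hρr0 : 0 ≤ ρr := ENNReal.toReal_nonneg
    have hρr1 : ρr < 1 := by
      rw [hρr, ← ENNReal.toReal_one]
      exact ENNReal.toReal_strict_mono ENNReal.one_ne_top hre2
    set N : ℕ := max N0 1 with hN
    have hbig : ∀ t : ℕ, N ≤ t → ‖Mc ^ t‖ ≤ ρr ^ t := by
      intro t ht
      have ht1 : 1 ≤ t := le_trans (le_max_right _ _) ht
      have h1 : ((‖Mc ^ t‖₊ : ℝ≥0∞) ^ (1 / (t : ℝ))) < re := hN0 t (le_trans (le_max_left _ _) ht)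
      have ht0 : (t : ℝ) ≠ 0 := Nat.cast_ne_zero.mpr (by omega)
      have h2 : (‖Mc ^ t‖₊ : ℝ≥0∞) ≤ re ^ (t : ℕ) := by
        have h3 := ENNReal.rpow_le_rpow h1.le (le_of_lt (by positivity : (0:ℝ) < (t:ℝ)))
        rw [← ENNReal.rpow_mul, one_div, inv_mul_cancel₀ ht0, ENNReal.rpow_one,
          ENNReal.rpow_natCast] at h3
        exact h3
      have h4 := ENNReal.toReal_mono (by exact ENNReal.pow_ne_top hre_ne_top) h2
      simpa [ENNReal.toReal_pow] using h4
    set B : ℝ := (∑ s ∈ Finset.range N, ‖Mc ^ s‖) + 1 with hB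
    have hBpos : 1 ≤ B := by
      rw [hB]
      have : 0 ≤ ∑ s ∈ Finset.range N, ‖Mc ^ s‖ :=
        Finset.sum_nonneg fun _ _ => norm_nonneg _
      linarith
    set ρ : ℝ := max ρr (1/2) with hρ
    have hρ0 : 0 < ρ := lt_of_lt_of_le (by norm_num) (le_max_right _ _)
    have hρ1 : ρ < 1 := max_lt hρr1 (by norm_num)
    have hρN : 0 < ρ ^ N := pow_pos hρ0 N
    set c : ℝ := B / ρ ^ N with hc
    have hc1 : 1 ≤ c := (one_le_div hρN).mpr (le_trans (pow_le_one₀ hρ0.le hρ1.le) hBpos)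
    refine ⟨c, ρ, le_trans zero_le_one hc1, hρ0.le, hρ1, fun t i j => ?_⟩
    have hpow : Mc ^ t = (M ^ t).map (Complex.ofReal : ℝ → ℂ) := by
      rw [hMc, show (Complex.ofReal : ℝ → ℂ) = ⇑Complex.ofRealHom from rfl,
        ← RingHom.mapMatrix_apply, ← map_pow, RingHom.mapMatrix_apply]
    have hentry : |(M ^ t) i j| = ‖(Mc ^ t) i j‖ := by
      rw [hpow, Matrix.map_apply]
      simp
    rw [hentry]
    refine le_trans (entry_norm_le _ i j) ?_
    rcases le_or_gt N t with hts | hts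
    · have h5 : ρr ^ t ≤ ρ ^ t := pow_le_pow_left₀ hρr0 (le_max_left _ _) t
      have h6 : ρ ^ t ≤ c * ρ ^ t := le_mul_of_one_le_left (pow_pos hρ0 t).le hc1
      linarith [hbig t hts]
    · have h7 : ‖Mc ^ t‖ ≤ ∑ s ∈ Finset.range N, ‖Mc ^ s‖ :=
        Finset.single_le_sum (f := fun s => ‖Mc ^ s‖) (fun _ _ => norm_nonneg _)
          (Finset.mem_range.mpr hts)
      have h8 : B = c * ρ ^ N := by rw [hc, div_mul_cancel₀]; exact hρN.ne'
      have h9 : c * ρ ^ N ≤ c * ρ ^ t := by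
        apply mul_le_mul_of_nonneg_left _ (le_trans zero_le_one hc1)
        exact pow_le_pow_of_le_one hρ0.le hρ1.le hts.le
      have : ‖Mc ^ t‖ ≤ B := by rw [hB]; linarith
      linarith

end Stability

end Spectral

section Conv



lemma psd_quad_nonneg {D : Matrix (Fin q) (Fin q) ℝ} (hD : D.PosSemidef) (x : Fin q → ℝ) :
    0 ≤ x ⬝ᵥ D *ᵥ x := by
  have := hD.dotProduct_mulVec_nonneg x
  rwa [star_trivial] at this

lemma quad_single {X : Matrix (Fin q) (Fin q) ℝ} (i j : Fin q) :
    Pi.single i (1:ℝ) ⬝ᵥ X *ᵥ Pi.single j (1:ℝ) = X i j := by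
  simp [dotProduct, Matrix.mulVec, Pi.single_apply, Finset.sum_ite_eq,
    Finset.mem_univ, mul_comm]

lemma polarization {X : Matrix (Fin q) (Fin q) ℝ} (hX : Xᵀ = X) (i j : Fin q) :
    X i j = ((Pi.single i 1 + Pi.single j 1) ⬝ᵥ X *ᵥ (Pi.single i 1 + Pi.single j 1)
      - Pi.single i 1 ⬝ᵥ X *ᵥ Pi.single i 1 - Pi.single j 1 ⬝ᵥ X *ᵥ Pi.single j 1) / 2 := by
  have hsym : X j i = X i j := by
    calc X j i = Xᵀ i j := (Matrix.transpose_apply X i j).symm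
    _ = X i j := by rw [hX]
  simp only [Matrix.mulVec_add, dotProduct_add, add_dotProduct, quad_single]
  rw [hsym]
  ring

lemma tendsto_entrywise {a b : ℕ} {Z : ℕ → Matrix (Fin a) (Fin b) ℝ} {L : Matrix (Fin a) (Fin b) ℝ}
    (h : ∀ i j, Tendsto (fun t => Z t i j) atTop (𝓝 (L i j))) :
    Tendsto Z atTop (𝓝 L) := by
  refine tendsto_pi_nhds.mpr ?_
  intro i
  rw [tendsto_pi_nhds]
  intro j
  exact h i j

lemma entry_tendsto {a b : ℕ} {Z : ℕ → Matrix (Fin a) (Fin b) ℝ} {L : Matrix (Fin a) (Fin b) ℝ}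
    (h : Tendsto Z atTop (𝓝 L)) (i : Fin a) (j : Fin b) :
    Tendsto (fun t => Z t i j) atTop (𝓝 (L i j)) := by
  have h1 := (tendsto_pi_nhds.mp h) i
  exact tendsto_pi_nhds.mp h1 j

lemma quad_tendsto {Z : ℕ → Matrix (Fin q) (Fin q) ℝ} {L : Matrix (Fin q) (Fin q) ℝ}
    (h : Tendsto Z atTop (𝓝 L)) (x : Fin q → ℝ) :
    Tendsto (fun t => x ⬝ᵥ Z t *ᵥ x) atTop (𝓝 (x ⬝ᵥ L *ᵥ x)) := by
  have : Tendsto (fun t => ∑ i, x i * (∑ j, Z t i j * x j)) atTop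
      (𝓝 (∑ i, x i * (∑ j, L i j * x j))) := by
    refine tendsto_finset_sum _ fun i _ => Tendsto.const_mul _ ?_
    exact tendsto_finset_sum _ fun j _ => ((entry_tendsto h i j).mul_const _)
  simpa [dotProduct, Matrix.mulVec] using this

/-- convergence from convergence of quadratic forms, for symmetric matrices -/
lemma tendsto_of_quad {Z : ℕ → Matrix (Fin q) (Fin q) ℝ} {L : Matrix (Fin q) (Fin q) ℝ}
    (hZ : ∀ t, (Z t)ᵀ = Z t) (hL : Lᵀ = L)
    (h : ∀ x, Tendsto (fun t => x ⬝ᵥ Z t *ᵥ x) atTop (𝓝 (x ⬝ᵥ L *ᵥ x))) :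
    Tendsto Z atTop (𝓝 L) := by
  refine tendsto_entrywise fun i j => ?_
  have hent : ∀ t, Z t i j = ((Pi.single i 1 + Pi.single j 1) ⬝ᵥ Z t *ᵥ
      (Pi.single i 1 + Pi.single j 1) - Pi.single i 1 ⬝ᵥ Z t *ᵥ Pi.single i 1
      - Pi.single j 1 ⬝ᵥ Z t *ᵥ Pi.single j 1) / 2 := fun t => polarization (hZ t) i j
  rw [polarization hL i j]
  simp only [hent]
  exact (((h _).sub (h _)).sub (h _)).div_const 2

/-- squeeze lemma for symmetric matrix sequences -/
lemma tendsto_squeeze {X A B : ℕ → Matrix (Fin q) (Fin q) ℝ} {L : Matrix (Fin q) (Fin q) ℝ}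
    (hXsym : ∀ t, (X t)ᵀ = X t) (hLsym : Lᵀ = L)
    (hAX : ∀ t, (X t - A t).PosSemidef) (hXB : ∀ t, (B t - X t).PosSemidef)
    (hA : Tendsto A atTop (𝓝 L)) (hB : Tendsto B atTop (𝓝 L)) :
    Tendsto X atTop (𝓝 L) := by
  refine tendsto_of_quad hXsym hLsym fun x => ?_
  have h1 : ∀ t, x ⬝ᵥ A t *ᵥ x ≤ x ⬝ᵥ X t *ᵥ x := by
    intro t
    have := psd_quad_nonneg (hAX t) x
    simp only [Matrix.sub_mulVec, dotProduct_sub] at this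
    linarith
  have h2 : ∀ t, x ⬝ᵥ X t *ᵥ x ≤ x ⬝ᵥ B t *ᵥ x := by
    intro t
    have := psd_quad_nonneg (hXB t) x
    simp only [Matrix.sub_mulVec, dotProduct_sub] at this
    linarith
  exact tendsto_of_tendsto_of_tendsto_of_le_of_le (quad_tendsto hA x) (quad_tendsto hB x) h1 h2

/-- monotone bounded symmetric sequences converge -/
lemma tendsto_of_monotone_bounded {Z : ℕ → Matrix (Fin q) (Fin q) ℝ}
    (hZ : ∀ t, (Z t)ᵀ = Z t) (hmono : ∀ t, (Z (t+1) - Z t).PosSemidef)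
    (hbd : ∀ x : Fin q → ℝ, ∃ b, ∀ t, x ⬝ᵥ Z t *ᵥ x ≤ b) :
    ∃ L : Matrix (Fin q) (Fin q) ℝ, Tendsto Z atTop (𝓝 L) := by
  have hq : ∀ x : Fin q → ℝ, ∃ l, Tendsto (fun t => x ⬝ᵥ Z t *ᵥ x) atTop (𝓝 l) := by
    intro x
    have hmon : Monotone fun t => x ⬝ᵥ Z t *ᵥ x := by
      refine monotone_nat_of_le_succ fun t => ?_
      have := psd_quad_nonneg (hmono t) x
      simp only [Matrix.sub_mulVec, dotProduct_sub] at this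
      linarith
    obtain ⟨b, hb⟩ := hbd x
    refine ⟨_, tendsto_atTop_ciSup hmon ⟨b, ?_⟩⟩
    rintro y ⟨t, rfl⟩
    exact hb t
  choose lq hlq using hq
  have hent : ∀ i j, ∃ l, Tendsto (fun t => Z t i j) atTop (𝓝 l) := by
    intro i j
    refine ⟨(lq (Pi.single i 1 + Pi.single j 1) - lq (Pi.single i 1) - lq (Pi.single j 1)) / 2, ?_⟩
    have hent' : ∀ t, Z t i j = ((Pi.single i 1 + Pi.single j 1) ⬝ᵥ Z t *ᵥ
        (Pi.single i 1 + Pi.single j 1) - Pi.single i 1 ⬝ᵥ Z t *ᵥ Pi.single i 1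
        - Pi.single j 1 ⬝ᵥ Z t *ᵥ Pi.single j 1) / 2 := fun t => polarization (hZ t) i j
    simp only [hent']
    exact (((hlq _).sub (hlq _)).sub (hlq _)).div_const 2
  choose L hL using hent
  exact ⟨Matrix.of L, tendsto_entrywise fun i j => hL i j⟩

lemma psd_of_tendsto {Z : ℕ → Matrix (Fin q) (Fin q) ℝ} {L : Matrix (Fin q) (Fin q) ℝ}
    (h : Tendsto Z atTop (𝓝 L)) (hZ : ∀ t, (Z t).PosSemidef) : L.PosSemidef := by
  refine Matrix.posSemidef_iff_dotProduct_mulVec.mpr ⟨?_, ?_⟩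
  · have hsym : ∀ i j, L i j = L j i := by
      intro i j
      have h1 := entry_tendsto h i j
      have h2 : Tendsto (fun t => Z t i j) atTop (𝓝 (L j i)) := by
        have h3 := entry_tendsto h j i
        refine h3.congr fun t => ?_
        have hherm : (Z t)ᴴ = Z t := (hZ t).isHermitian
        calc Z t j i = (Z t)ᴴ i j := by simp [Matrix.conjTranspose_apply]
        _ = Z t i j := by rw [hherm]
      exact tendsto_nhds_unique h1 h2
    show Lᴴ = L
    ext i j
    simp [Matrix.conjTranspose_apply, hsym i j]
  · intro x
    rw [star_trivial]
    have := quad_tendsto h x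
    exact ge_of_tendsto' this fun t => psd_quad_nonneg (hZ t) x

end Conv

section Cx
open scoped ComplexOrder


def cx {a b : ℕ} (X : Matrix (Fin a) (Fin b) ℝ) : Matrix (Fin a) (Fin b) ℂ :=
  X.map (Complex.ofReal : ℝ → ℂ)

lemma cx_mul {a b c : ℕ} (X : Matrix (Fin a) (Fin b) ℝ) (Y : Matrix (Fin b) (Fin c) ℝ) :
    cx (X * Y) = cx X * cx Y :=
  Matrix.map_mul (f := Complex.ofRealHom)

lemma cx_add {a b : ℕ} (X Y : Matrix (Fin a) (Fin b) ℝ) : cx (X + Y) = cx X + cx Y :=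
  Matrix.map_add _ (by simp) _ _

lemma cx_sub {a b : ℕ} (X Y : Matrix (Fin a) (Fin b) ℝ) : cx (X - Y) = cx X - cx Y :=
  Matrix.map_sub _ (by simp) _ _

lemma cx_conjTranspose {a b : ℕ} (X : Matrix (Fin a) (Fin b) ℝ) : (cx X)ᴴ = cx Xᵀ := by
  ext i j
  simp [cx, Matrix.conjTranspose_apply, Matrix.map_apply]

lemma cx_posSemidef {a : ℕ} {X : Matrix (Fin a) (Fin a) ℝ} (hX : X.PosSemidef) :
    (cx X).PosSemidef := by
  obtain ⟨B, hB⟩ : ∃ B : Matrix (Fin a) (Fin a) ℝ, X = Bᴴ * B := by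
    open scoped MatrixOrder Matrix.Norms.L2Operator in
    obtain ⟨B, hB⟩ := CStarAlgebra.nonneg_iff_eq_star_mul_self.mp hX.nonneg
    exact ⟨B, hB⟩
  have : cx X = (cx B)ᴴ * cx B := by
    rw [cx_conjTranspose, ← cx_mul, hB, Matrix.conjTranspose_eq_transpose_of_trivial]
  rw [this]
  exact Matrix.posSemidef_conjTranspose_mul_self _

lemma star_self_nonneg {a : ℕ} (v : Fin a → ℂ) : 0 ≤ star v ⬝ᵥ v := by
  rw [dotProduct]
  exact Finset.sum_nonneg fun i _ => by simpa [Pi.star_apply] using star_mul_self_nonneg (v i)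

lemma dot_mulVec_star {a b : ℕ} (N : Matrix (Fin a) (Fin b) ℂ) (x : Fin a → ℂ) (w : Fin b → ℂ) :
    star x ⬝ᵥ (N *ᵥ w) = star (Nᴴ *ᵥ x) ⬝ᵥ w := by
  rw [Matrix.dotProduct_mulVec]
  congr 1
  rw [Matrix.star_mulVec, Matrix.conjTranspose_conjTranspose]

lemma cx_transpose {a b : ℕ} (X : Matrix (Fin a) (Fin b) ℝ) : (cx X)ᵀ = cx Xᵀ := by
  ext i j
  simp [cx, Matrix.map_apply]

lemma cx_det_isUnit {a : ℕ} {X : Matrix (Fin a) (Fin a) ℝ} (hX : IsUnit X.det) :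
    IsUnit (cx X).det := by
  have : (cx X).det = Complex.ofReal X.det := by
    rw [show cx X = Complex.ofRealHom.mapMatrix X from rfl, ← RingHom.map_det]
    rfl
  rw [this]
  simpa [isUnit_iff_ne_zero, Complex.ofReal_eq_zero] using
    isUnit_iff_ne_zero.mp hX

end Cx

section Stabilizing
open scoped ComplexOrder
variable {A : Matrix (Fin q) (Fin q) ℝ} {C : Matrix (Fin p) (Fin q) ℝ}
  {G : Matrix (Fin q) (Fin k) ℝ} {Q : Matrix (Fin k) (Fin k) ℝ}
  {S : Matrix (Fin k) (Fin p) ℝ} {R : Matrix (Fin p) (Fin p) ℝ}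
  {Bhalf : Matrix (Fin k) (Fin k) ℝ}

set_option maxHeartbeats 2000000 in
lemma solution_stabilizing (hR : R.PosDef) (hBhalf : Bhalf * Bhalfᵀ = Q - S * R⁻¹ * Sᵀ)
    (hstab : ∃ K : Matrix (Fin k) (Fin q) ℝ,
      ∀ z ∈ spectrum ℂ (((A - G * S * R⁻¹ * C) - G * Bhalf * K).map (Complex.ofReal : ℝ → ℂ)),
        ‖z‖ < 1)
    {P : Matrix (Fin q) (Fin q) ℝ} (hP : P.PosSemidef) (hare : P = rf A C G Q S R P) :
    ∀ z ∈ spectrum ℂ ((A - rL A C G S R P * C).map (Complex.ofReal : ℝ → ℂ)),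
      ‖z‖ < 1 := by
  intro z hz
  by_contra habs
  have hz1 : 1 ≤ ‖z‖ := not_lt.mp habs
  obtain ⟨K, hK⟩ := hstab
  obtain ⟨L, hLdef⟩ : ∃ L', L' = rL A C G S R P := ⟨_, rfl⟩
  obtain ⟨F, hFdef⟩ : ∃ F', F' = A - L * C := ⟨_, rfl⟩
  rw [← hLdef, ← hFdef] at hz
  obtain ⟨N1, hN1def⟩ : ∃ N', N' = G * Bhalf := ⟨_, rfl⟩
  obtain ⟨N2, hN2def⟩ : ∃ N', N' = G * S * R⁻¹ - L := ⟨_, rfl⟩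
  have hdecomp : P = F * P * Fᵀ + (N1 * N1ᵀ + N2 * R * N2ᵀ) := by
    rw [hFdef, hN1def, hN2def, hLdef]
    conv_lhs => rw [hare, rf_eq_rg hR hP]
    rw [rg, rGam_decomp hR hBhalf]
  obtain ⟨x, hx0, hxeig⟩ := spectrum_exists_eigen hz
  have hxeig' : cx Fᵀ *ᵥ x = z • x := by
    rw [← cx_transpose]
    exact hxeig
  obtain ⟨u1, hu1def⟩ : ∃ u, u = cx N1ᵀ *ᵥ x := ⟨_, rfl⟩
  obtain ⟨u2, hu2def⟩ : ∃ u, u = cx N2ᵀ *ᵥ x := ⟨_, rfl⟩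
  obtain ⟨c, hcdef⟩ : ∃ c', c' = star x ⬝ᵥ (cx P *ᵥ x) := ⟨_, rfl⟩
  obtain ⟨t1, ht1def⟩ : ∃ t', t' = star u1 ⬝ᵥ u1 := ⟨_, rfl⟩
  obtain ⟨t2, ht2def⟩ : ∃ t', t' = star u2 ⬝ᵥ (cx R *ᵥ u2) := ⟨_, rfl⟩
  have hc : 0 ≤ c := by rw [hcdef]; exact (cx_posSemidef hP).dotProduct_mulVec_nonneg x
  have ht1 : 0 ≤ t1 := by rw [ht1def]; exact star_self_nonneg u1
  have ht2 : 0 ≤ t2 := by rw [ht2def]; exact (cx_posSemidef hR.posSemidef).dotProduct_mulVec_nonneg u2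
  have hceq : c = (Complex.normSq z : ℂ) * c + (t1 + t2) := by
    have hPc : cx P = cx F * cx P * cx Fᵀ + (cx N1 * cx N1ᵀ + cx N2 * cx R * cx N2ᵀ) := by
      conv_lhs => rw [hdecomp]
      rw [cx_add, cx_add, cx_mul, cx_mul, cx_mul, cx_mul, cx_mul]
    have e2 : star x ⬝ᵥ ((cx F * cx P) *ᵥ x) = star z * c := by
      rw [← Matrix.mulVec_mulVec, dot_mulVec_star, cx_conjTranspose, hxeig', star_smul,
        smul_dotProduct, ← hcdef, smul_eq_mul]
    have htermA : star x ⬝ᵥ ((cx F * cx P * cx Fᵀ) *ᵥ x) = (Complex.normSq z : ℂ) * c := by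
      have e1 : (cx F * cx P * cx Fᵀ) *ᵥ x = (cx F * cx P) *ᵥ (cx Fᵀ *ᵥ x) := by
        rw [Matrix.mulVec_mulVec]
      rw [e1, hxeig', Matrix.mulVec_smul, dotProduct_smul, e2, smul_eq_mul,
        ← mul_assoc, Complex.star_def, Complex.mul_conj]
    have htermB : star x ⬝ᵥ ((cx N1 * cx N1ᵀ) *ᵥ x) = t1 := by
      rw [← Matrix.mulVec_mulVec, dot_mulVec_star, cx_conjTranspose, ← hu1def, ← ht1def]
    have htermC : star x ⬝ᵥ ((cx N2 * cx R * cx N2ᵀ) *ᵥ x) = t2 := by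
      rw [Matrix.mul_assoc, ← Matrix.mulVec_mulVec, ← Matrix.mulVec_mulVec, dot_mulVec_star,
        cx_conjTranspose, ← hu2def, ← ht2def]
    conv_lhs => rw [hcdef, hPc]
    rw [Matrix.add_mulVec, dotProduct_add, Matrix.add_mulVec, dotProduct_add,
      htermA, htermB, htermC]
  have hcim : c.im = 0 := ((Complex.le_def.mp hc).2).symm
  have hcre : 0 ≤ c.re := by simpa using (Complex.le_def.mp hc).1
  have ht1im : t1.im = 0 := ((Complex.le_def.mp ht1).2).symm
  have ht1re : 0 ≤ t1.re := by simpa using (Complex.le_def.mp ht1).1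
  have ht2im : t2.im = 0 := ((Complex.le_def.mp ht2).2).symm
  have ht2re : 0 ≤ t2.re := by simpa using (Complex.le_def.mp ht2).1
  have hm : 1 ≤ Complex.normSq z := by
    rw [Complex.normSq_eq_norm_sq]
    nlinarith
  have hre : c.re = Complex.normSq z * c.re + (t1.re + t2.re) := by
    have h := congrArg Complex.re hceq
    simpa [Complex.add_re, Complex.mul_re, Complex.ofReal_re, Complex.ofReal_im, hcim] using h
  have ht1zero : t1 = 0 := by
    apply Complex.ext _ ht1im
    show t1.re = (0:ℂ).re
    rw [Complex.zero_re]
    nlinarith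
  have ht2zero : t2 = 0 := by
    apply Complex.ext _ ht2im
    show t2.re = (0:ℂ).re
    rw [Complex.zero_re]
    nlinarith
  have hu1zero : u1 = 0 := by
    apply dotProduct_star_self_eq_zero.mp
    rw [← ht1def]
    exact ht1zero
  have hu2zero : u2 = 0 := by
    have hRu2 : cx R *ᵥ u2 = 0 := by
      apply ((cx_posSemidef hR.posSemidef).dotProduct_mulVec_zero_iff u2).mp
      rw [← ht2def]
      exact ht2zero
    have hdetc : IsUnit (cx R).det :=
      cx_det_isUnit (isUnit_iff_ne_zero.2 (ne_of_gt hR.det_pos))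
    calc u2 = ((cx R)⁻¹ * cx R) *ᵥ u2 := by
          rw [Matrix.nonsing_inv_mul _ hdetc, Matrix.one_mulVec]
    _ = (cx R)⁻¹ *ᵥ (cx R *ᵥ u2) := by rw [Matrix.mulVec_mulVec]
    _ = 0 := by rw [hRu2, Matrix.mulVec_zero]
  have hreal : ((A - G * S * R⁻¹ * C) - G * Bhalf * K)ᵀ = Fᵀ - Cᵀ * N2ᵀ - Kᵀ * N1ᵀ := by
    rw [hFdef, hN1def, hN2def]
    simp only [Matrix.transpose_sub, Matrix.transpose_mul, Matrix.mul_sub, Matrix.sub_mul,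
      Matrix.mul_assoc]
    abel
  have heig2 : (cx ((A - G * S * R⁻¹ * C) - G * Bhalf * K))ᵀ *ᵥ x = z • x := by
    rw [cx_transpose, hreal, cx_sub, cx_sub, cx_mul, cx_mul, Matrix.sub_mulVec,
      Matrix.sub_mulVec, ← Matrix.mulVec_mulVec, ← Matrix.mulVec_mulVec, ← hu1def, ← hu2def,
      hu1zero, hu2zero, hxeig', Matrix.mulVec_zero, Matrix.mulVec_zero, sub_zero, sub_zero]
  exact absurd (hK z (eigen_mem_spectrum hx0 heig2)) habs

end Stabilizing

section Stability2

lemma eigen_mem_spectrum' {n : ℕ} {N : Matrix (Fin n) (Fin n) ℂ} {z : ℂ} {x : Fin n → ℂ}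
    (hx : x ≠ 0) (h : N *ᵥ x = z • x) : z ∈ spectrum ℂ N := by
  rw [spectrum.mem_iff]
  intro hU
  rw [Matrix.isUnit_iff_isUnit_det] at hU
  have hker : (algebraMap ℂ (Matrix (Fin n) (Fin n) ℂ) z - N).det = 0 := by
    rw [← Matrix.exists_mulVec_eq_zero_iff]
    refine ⟨x, hx, ?_⟩
    rw [Matrix.sub_mulVec, h, Algebra.algebraMap_eq_smul_one, Matrix.smul_mulVec,
      Matrix.one_mulVec, sub_self]
  rw [hker] at hU
  exact (isUnit_iff_ne_zero.mp hU) rfl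

lemma stable_transpose {n : ℕ} {M : Matrix (Fin n) (Fin n) ℝ}
    (h : ∀ z ∈ spectrum ℂ (M.map (Complex.ofReal : ℝ → ℂ)), ‖z‖ < 1) :
    ∀ z ∈ spectrum ℂ (Mᵀ.map (Complex.ofReal : ℝ → ℂ)), ‖z‖ < 1 := by
  intro z hz
  have hz' : z ∈ spectrum ℂ ((cx M)ᵀ) := by rw [cx_transpose]; exact hz
  obtain ⟨x, hx0, hxe⟩ := spectrum_exists_eigen hz'
  rw [Matrix.transpose_transpose] at hxe
  exact h z (eigen_mem_spectrum' hx0 hxe)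

lemma entry_triple_bound {n : ℕ} (m1 D m2 : Matrix (Fin n) (Fin n) ℝ) {c1 c2 : ℝ}
    (h1 : ∀ i j, |m1 i j| ≤ c1) (h2 : ∀ i j, |m2 i j| ≤ c2) (hc1 : 0 ≤ c1) (hc2 : 0 ≤ c2)
    (i j : Fin n) : |(m1 * D * m2ᵀ) i j| ≤ c1 * c2 * ∑ a, ∑ b, |D a b| := by
  have hentry : (m1 * D * m2ᵀ) i j = ∑ b, (∑ a, m1 i a * D a b) * m2 j b := by
    rw [Matrix.mul_apply]
    refine Finset.sum_congr rfl fun b _ => ?_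
    rw [Matrix.mul_apply, Matrix.transpose_apply]
  rw [hentry]
  calc |∑ b, (∑ a, m1 i a * D a b) * m2 j b| ≤ ∑ b, |(∑ a, m1 i a * D a b) * m2 j b| :=
        Finset.abs_sum_le_sum_abs _ _
  _ ≤ ∑ b, ∑ a, |m1 i a| * |D a b| * |m2 j b| := by
      refine Finset.sum_le_sum fun b _ => ?_
      rw [abs_mul]
      calc |∑ a, m1 i a * D a b| * |m2 j b| ≤ (∑ a, |m1 i a * D a b|) * |m2 j b| :=
            mul_le_mul_of_nonneg_right (Finset.abs_sum_le_sum_abs _ _) (abs_nonneg _)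
      _ = ∑ a, |m1 i a| * |D a b| * |m2 j b| := by rw [Finset.sum_mul]; simp [abs_mul]
  _ ≤ ∑ b, ∑ a, c1 * |D a b| * c2 := by
      refine Finset.sum_le_sum fun b _ => Finset.sum_le_sum fun a _ => ?_
      exact mul_le_mul (mul_le_mul (h1 i a) le_rfl (abs_nonneg _) hc1) (h2 j b) (abs_nonneg _)
        (by positivity)
  _ = c1 * c2 * ∑ a, ∑ b, |D a b| := by
      rw [Finset.sum_comm, Finset.mul_sum]
      refine Finset.sum_congr rfl fun a _ => ?_
      rw [Finset.mul_sum]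
      refine Finset.sum_congr rfl fun b _ => by ring

lemma quad_entry_bound {n : ℕ} (Y : Matrix (Fin n) (Fin n) ℝ) (x : Fin n → ℝ) {κ : ℝ}
    (hκ : 0 ≤ κ) (hY : ∀ a b, |Y a b| ≤ κ) : x ⬝ᵥ Y *ᵥ x ≤ κ * (∑ a, |x a|) ^ 2 := by
  refine le_trans (le_abs_self _) ?_
  have hform : x ⬝ᵥ Y *ᵥ x = ∑ a, x a * ∑ b, Y a b * x b := rfl
  rw [hform]
  calc |∑ a, x a * ∑ b, Y a b * x b| ≤ ∑ a, |x a * ∑ b, Y a b * x b| :=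
        Finset.abs_sum_le_sum_abs _ _
  _ ≤ ∑ a, ∑ b, |x a| * (κ * |x b|) := by
      refine Finset.sum_le_sum fun a _ => ?_
      rw [abs_mul]
      calc |x a| * |∑ b, Y a b * x b| ≤ |x a| * ∑ b, |Y a b * x b| :=
            mul_le_mul_of_nonneg_left (Finset.abs_sum_le_sum_abs _ _) (abs_nonneg _)
      _ = ∑ b, |x a| * |Y a b * x b| := by rw [Finset.mul_sum]
      _ ≤ ∑ b, |x a| * (κ * |x b|) := by
          refine Finset.sum_le_sum fun b _ => ?_
          rw [abs_mul]
          exact mul_le_mul_of_nonneg_left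
            (mul_le_mul_of_nonneg_right (hY a b) (abs_nonneg _)) (abs_nonneg _)
  _ = κ * (∑ a, |x a|) ^ 2 := by
      rw [sq, Finset.sum_mul_sum]
      rw [Finset.mul_sum]
      refine Finset.sum_congr rfl fun a _ => ?_
      rw [Finset.mul_sum]
      exact Finset.sum_congr rfl fun b _ => by ring

lemma geom_partial_le {r : ℝ} (h0 : 0 ≤ r) (h1 : r < 1) (n : ℕ) :
    ∑ j ∈ Finset.range n, r ^ j ≤ 1 / (1 - r) := by
  rw [geom_sum_eq (ne_of_lt h1)]
  have hd : (0:ℝ) < 1 - r := by linarith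
  have : (r ^ n - 1) / (r - 1) = (1 - r ^ n) / (1 - r) := by
    rw [← neg_sub (1:ℝ) (r ^ n), ← neg_sub (1:ℝ) r, neg_div_neg_eq]
  rw [this, div_le_div_iff₀ hd hd]
  nlinarith [pow_nonneg h0 n]

lemma tendsto_triple_zero {n : ℕ} {M1 M2 : Matrix (Fin n) (Fin n) ℝ}
    (h1 : ∀ z ∈ spectrum ℂ (M1.map (Complex.ofReal : ℝ → ℂ)), ‖z‖ < 1)
    (h2 : ∀ z ∈ spectrum ℂ (M2.map (Complex.ofReal : ℝ → ℂ)), ‖z‖ < 1)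
    (D : Matrix (Fin n) (Fin n) ℝ) :
    Tendsto (fun t => M1 ^ t * D * (M2 ^ t)ᵀ) atTop (𝓝 (0 : Matrix (Fin n) (Fin n) ℝ)) := by
  obtain ⟨c1, ρ1, hc1, hρ1, hρ1', hb1⟩ := stable_norm_bound M1 h1
  obtain ⟨c2, ρ2, hc2, hρ2, hρ2', hb2⟩ := stable_norm_bound M2 h2
  refine tendsto_entrywise fun i j => ?_
  have hzero : (0 : Matrix (Fin n) (Fin n) ℝ) i j = 0 := rfl
  rw [hzero]
  have hb : ∀ t, ‖(M1 ^ t * D * (M2 ^ t)ᵀ) i j‖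
      ≤ (c1 * c2 * ∑ a, ∑ b, |D a b|) * (ρ1 * ρ2) ^ t := by
    intro t
    have := entry_triple_bound (M1 ^ t) D (M2 ^ t) (fun i j => hb1 t i j) (fun i j => hb2 t i j)
      (by positivity) (by positivity) i j
    rw [Real.norm_eq_abs]
    calc |(M1 ^ t * D * (M2 ^ t)ᵀ) i j| ≤ (c1 * ρ1 ^ t) * (c2 * ρ2 ^ t) * ∑ a, ∑ b, |D a b| :=
          this
    _ = (c1 * c2 * ∑ a, ∑ b, |D a b|) * (ρ1 * ρ2) ^ t := by rw [mul_pow]; ring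
  have hg : Tendsto (fun t : ℕ => (c1 * c2 * ∑ a, ∑ b, |D a b|) * (ρ1 * ρ2) ^ t) atTop
      (𝓝 0) := by
    have hlt : ρ1 * ρ2 < 1 := by nlinarith
    have h0 : 0 ≤ ρ1 * ρ2 := by positivity
    simpa using (tendsto_pow_atTop_nhds_zero_of_lt_one h0 hlt).const_mul
      (c1 * c2 * ∑ a, ∑ b, |D a b|)
  exact squeeze_zero_norm hb hg

lemma pow_tendsto_conj_zero {n : ℕ} {M : Matrix (Fin n) (Fin n) ℝ}
    (h : ∀ z ∈ spectrum ℂ (M.map (Complex.ofReal : ℝ → ℂ)), ‖z‖ < 1)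
    (D : Matrix (Fin n) (Fin n) ℝ) :
    Tendsto (fun t => M ^ t * D * (M ^ t)ᵀ) atTop (𝓝 (0 : Matrix (Fin n) (Fin n) ℝ)) :=
  tendsto_triple_zero h h D

end Stability2

section Uniqueness
variable {A : Matrix (Fin q) (Fin q) ℝ} {C : Matrix (Fin p) (Fin q) ℝ}
  {G : Matrix (Fin q) (Fin k) ℝ} {Q : Matrix (Fin k) (Fin k) ℝ}
  {S : Matrix (Fin k) (Fin p) ℝ} {R : Matrix (Fin p) (Fin p) ℝ}
  {Bhalf : Matrix (Fin k) (Fin k) ℝ}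

lemma are_unique (hR : R.PosDef) (hBhalf : Bhalf * Bhalfᵀ = Q - S * R⁻¹ * Sᵀ)
    (hstab : ∃ K : Matrix (Fin k) (Fin q) ℝ,
      ∀ z ∈ spectrum ℂ (((A - G * S * R⁻¹ * C) - G * Bhalf * K).map (Complex.ofReal : ℝ → ℂ)),
        ‖z‖ < 1)
    {P1 P2 : Matrix (Fin q) (Fin q) ℝ} (hP1 : P1.PosSemidef) (hP2 : P2.PosSemidef)
    (hare1 : P1 = rf A C G Q S R P1) (hare2 : P2 = rf A C G Q S R P2) : P1 = P2 := by
  have hs1 := solution_stabilizing hR hBhalf hstab hP1 hare1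
  have hs2 := solution_stabilizing hR hBhalf hstab hP2 hare2
  obtain ⟨F1, hF1⟩ : ∃ F', F' = A - rL A C G S R P1 * C := ⟨_, rfl⟩
  obtain ⟨F2, hF2⟩ : ∃ F', F' = A - rL A C G S R P2 * C := ⟨_, rfl⟩
  have hs1' : ∀ z ∈ spectrum ℂ (F1.map (Complex.ofReal : ℝ → ℂ)), ‖z‖ < 1 := by
    rw [hF1]; exact hs1
  have hs2' : ∀ z ∈ spectrum ℂ (F2.map (Complex.ofReal : ℝ → ℂ)), ‖z‖ < 1 := by
    rw [hF2]; exact hs2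
  have hstep : P1 - P2 = F1 * (P1 - P2) * F2ᵀ := by
    rw [hF1, hF2]
    conv_lhs => rw [hare1, hare2]
    exact rf_diff hR hP1 hP2
  have hiter : ∀ t : ℕ, P1 - P2 = F1 ^ t * (P1 - P2) * (F2 ^ t)ᵀ := by
    intro t
    induction t with
    | zero => simp
    | succ t ih =>
      conv_lhs => rw [hstep, ih]
      rw [pow_succ', pow_succ']
      simp only [Matrix.transpose_mul, Matrix.mul_assoc]
  have hto := tendsto_triple_zero hs1' hs2' (P1 - P2)
  have hconst' : Tendsto (fun t : ℕ => F1 ^ t * (P1 - P2) * (F2 ^ t)ᵀ) atTop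
      (𝓝 (P1 - P2)) := by
    exact Tendsto.congr (fun t => hiter t) tendsto_const_nhds
  have h0 : P1 - P2 = 0 := tendsto_nhds_unique hconst' hto
  exact sub_eq_zero.mp h0

end Uniqueness

section Continuity
variable {A : Matrix (Fin q) (Fin q) ℝ} {C : Matrix (Fin p) (Fin q) ℝ}
  {G : Matrix (Fin q) (Fin k) ℝ} {Q : Matrix (Fin k) (Fin k) ℝ}
  {S : Matrix (Fin k) (Fin p) ℝ} {R : Matrix (Fin p) (Fin p) ℝ}

set_option maxHeartbeats 1000000 in
lemma rf_continuousAt {X : Matrix (Fin q) (Fin q) ℝ} (hu : IsUnit (rT C R X).det) :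
    ContinuousAt (rf A C G Q S R) X := by
  have hM : Continuous fun P : Matrix (Fin q) (Fin q) ℝ => rM A C G S P := by
    unfold rM
    exact ((continuous_const.matrix_mul continuous_id).matrix_mul continuous_const).add
      continuous_const
  have hT : Continuous fun P : Matrix (Fin q) (Fin q) ℝ => rT C R P := by
    unfold rT
    exact continuous_const.add ((continuous_const.matrix_mul continuous_id).matrix_mul
      continuous_const)
  have hTinv : ContinuousAt (fun P : Matrix (Fin q) (Fin q) ℝ => (rT C R P)⁻¹) X := by
    have h1 : ContinuousAt Inv.inv (rT C R X) := by
      apply continuousAt_matrix_inv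
      rw [Ring.inverse_eq_inv']
      exact continuousAt_inv₀ (isUnit_iff_ne_zero.mp hu)
    exact h1.comp hT.continuousAt
  have hmulq : Continuous fun xy : Matrix (Fin q) (Fin p) ℝ × Matrix (Fin p) (Fin p) ℝ =>
      xy.1 * xy.2 := continuous_fst.matrix_mul continuous_snd
  have hmulq2 : Continuous fun xy : Matrix (Fin q) (Fin p) ℝ × Matrix (Fin p) (Fin q) ℝ =>
      xy.1 * xy.2 := continuous_fst.matrix_mul continuous_snd
  have hMT : ContinuousAt (fun P : Matrix (Fin q) (Fin q) ℝ =>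
      rM A C G S P * (rT C R P)⁻¹) X :=
    hmulq.continuousAt.comp (hM.continuousAt.prodMk hTinv)
  have hbig : ContinuousAt (fun P : Matrix (Fin q) (Fin q) ℝ =>
      rM A C G S P * (rT C R P)⁻¹ * (rM A C G S P)ᵀ) X :=
    hmulq2.continuousAt.comp (hMT.prodMk (hM.matrix_transpose.continuousAt))
  unfold rf
  exact (((continuous_const.matrix_mul continuous_id).matrix_mul
    continuous_const).add continuous_const).continuousAt.sub hbig

end Continuity

section SumRec

lemma sum_pow_rec {n : ℕ} (M Γ0 : Matrix (Fin n) (Fin n) ℝ) (t : ℕ) :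
    (∑ j ∈ Finset.range (t+1), M ^ j * Γ0 * (M ^ j)ᵀ)
      = M * (∑ j ∈ Finset.range t, M ^ j * Γ0 * (M ^ j)ᵀ) * Mᵀ + Γ0 := by
  rw [Finset.sum_range_succ']
  simp only [pow_zero, Matrix.one_mul, Matrix.mul_one, Matrix.transpose_one]
  congr 1
  rw [Finset.mul_sum, Finset.sum_mul]
  refine Finset.sum_congr rfl fun j _ => ?_
  rw [pow_succ']
  simp only [Matrix.transpose_mul, Matrix.mul_assoc]

end SumRec

end Stmt17

open Stmt17 Matrix Filter
open scoped Topology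

set_option maxHeartbeats 4000000 in
/-- convergence of the generalized matrix difference Riccati equation to
the unique positive semidefinite stabilizing solution of the algebraic Riccati equation,
under detectability of `{A, C}` and stabilizability of `{A*, G·B*^{1/2}}`,
where `A* = A - G·S·R⁻¹·C` and `B* = Q - S·R⁻¹·Sᵀ = B*^{1/2}·(B*^{1/2})ᵀ`. -/
theorem stmt_17 (q p k : ℕ)
    (A : Matrix (Fin q) (Fin q) ℝ) (C : Matrix (Fin p) (Fin q) ℝ)
    (G : Matrix (Fin q) (Fin k) ℝ) (Q : Matrix (Fin k) (Fin k) ℝ)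
    (S : Matrix (Fin k) (Fin p) ℝ) (R : Matrix (Fin p) (Fin p) ℝ)
    (hQ : Q.PosSemidef) (hR : R.PosDef)
    (Bhalf : Matrix (Fin k) (Fin k) ℝ)
    (hBstar : (Q - S * R⁻¹ * Sᵀ).PosSemidef)
    (hBhalf : Bhalf * Bhalfᵀ = Q - S * R⁻¹ * Sᵀ)
    (hdet : ∃ K : Matrix (Fin q) (Fin p) ℝ,
      ∀ z ∈ spectrum ℂ ((A - K * C).map (Complex.ofReal : ℝ → ℂ)),
        ‖z‖ < 1)
    (hstab : ∃ K : Matrix (Fin k) (Fin q) ℝ,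
      ∀ z ∈ spectrum ℂ
        (((A - G * S * R⁻¹ * C) - G * Bhalf * K).map (Complex.ofReal : ℝ → ℂ)),
        ‖z‖ < 1) :
    ∀ P : ℕ → Matrix (Fin q) (Fin q) ℝ, (P 0).PosSemidef →
    (∀ t, P (t + 1) = A * P t * Aᵀ + G * Q * Gᵀ -
      (A * P t * Cᵀ + G * S) * (R + C * P t * Cᵀ)⁻¹ * (A * P t * Cᵀ + G * S)ᵀ) →
    (∀ t, (R + C * P t * Cᵀ).PosDef) ∧
    ∃ Pinf : Matrix (Fin q) (Fin q) ℝ,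
      Pinf.PosSemidef ∧
      Pinf = A * Pinf * Aᵀ + G * Q * Gᵀ -
        (A * Pinf * Cᵀ + G * S) * (R + C * Pinf * Cᵀ)⁻¹ * (A * Pinf * Cᵀ + G * S)ᵀ ∧
      (∀ P' : Matrix (Fin q) (Fin q) ℝ, P'.PosSemidef →
        P' = A * P' * Aᵀ + G * Q * Gᵀ -
          (A * P' * Cᵀ + G * S) * (R + C * P' * Cᵀ)⁻¹ * (A * P' * Cᵀ + G * S)ᵀ →
        P' = Pinf) ∧
      (∀ z ∈ spectrum ℂ
        ((A - (A * Pinf * Cᵀ + G * S) * (R + C * Pinf * Cᵀ)⁻¹ * C).map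
          (Complex.ofReal : ℝ → ℂ)),
        ‖z‖ < 1) ∧
      Filter.Tendsto P Filter.atTop (nhds Pinf) := by
  intro P hP0 hPrec
  have hPrec' : ∀ t, P (t + 1) = rf A C G Q S R (P t) := fun t => hPrec t
  have hPpsd : ∀ t, (P t).PosSemidef := by
    intro t
    induction t with
    | zero => exact hP0
    | succ t ih => rw [hPrec' t]; exact rf_posSemidef hR hBhalf ih
  have hPsym : ∀ t, (P t)ᵀ = P t := fun t => herm_transpose (hPpsd t).isHermitian
  refine ⟨fun t => posDef_rT hR (hPpsd t), ?_⟩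
  -- the zero-initialized sequence
  set Z : ℕ → Matrix (Fin q) (Fin q) ℝ := fun t => (rf A C G Q S R)^[t] 0 with hZdef
  have hZ0 : Z 0 = 0 := rfl
  have hZrec : ∀ t, Z (t + 1) = rf A C G Q S R (Z t) := fun t =>
    Function.iterate_succ_apply' _ _ _
  have hZpsd : ∀ t, (Z t).PosSemidef := by
    intro t
    induction t with
    | zero => exact .zero
    | succ t ih => rw [hZrec t]; exact rf_posSemidef hR hBhalf ih
  have hZsym : ∀ t, (Z t)ᵀ = Z t := fun t => herm_transpose (hZpsd t).isHermitian
  have hZmono : ∀ t, (Z (t + 1) - Z t).PosSemidef := by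
    intro t
    induction t with
    | zero =>
      rw [hZrec 0, hZ0, sub_zero]
      exact rf_posSemidef hR hBhalf .zero
    | succ t ih =>
      rw [hZrec (t + 1), hZrec t]
      rw [hZrec t] at ih
      exact rf_mono hR (hZpsd t) (rf_posSemidef hR hBhalf (hZpsd t)) ih
  -- boundedness via detectability
  obtain ⟨K0, hK0⟩ := hdet
  obtain ⟨M0, hM0⟩ : ∃ M', M' = A - K0 * C := ⟨_, rfl⟩
  have hM0stable : ∀ z ∈ spectrum ℂ (M0.map (Complex.ofReal : ℝ → ℂ)), ‖z‖ < 1 := by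
    rw [hM0]; exact hK0
  obtain ⟨c0, ρ0, hc0, hρ0, hρ0', hb0⟩ := stable_norm_bound M0 hM0stable
  obtain ⟨Γ0, hΓ0⟩ : ∃ Γ', Γ' = rGam G Q S R K0 := ⟨_, rfl⟩
  set Sg : ℕ → Matrix (Fin q) (Fin q) ℝ :=
    fun t => ∑ j ∈ Finset.range t, M0 ^ j * Γ0 * (M0 ^ j)ᵀ with hSgdef
  have hSg0 : Sg 0 = 0 := by rw [hSgdef]; exact Finset.sum_range_zero _
  have hSgsucc : ∀ t, Sg (t + 1) = Sg t + M0 ^ t * Γ0 * (M0 ^ t)ᵀ := by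
    intro t; rw [hSgdef]; exact Finset.sum_range_succ _ _
  have hSgrec : ∀ t, Sg (t + 1) = M0 * Sg t * M0ᵀ + Γ0 := by
    intro t; rw [hSgdef]; exact sum_pow_rec M0 Γ0 t
  have hSgg : ∀ t, Sg (t + 1) = rg A C G Q S R (Sg t) K0 := by
    intro t
    rw [hSgrec t, rg, ← hΓ0, ← hM0]
  have hcomp : ∀ t, (Sg t - Z t).PosSemidef := by
    intro t
    induction t with
    | zero => rw [hSg0, hZ0, sub_zero]; exact .zero
    | succ t ih =>
      rw [hSgg t, hZrec t]
      have key : rg A C G Q S R (Sg t) K0 - rf A C G Q S R (Z t)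
          = (rg A C G Q S R (Sg t) K0 - rg A C G Q S R (Z t) K0)
            + (rg A C G Q S R (Z t) K0 - rf A C G Q S R (Z t)) := by abel
      rw [key]
      exact (rg_mono ih K0).add (rg_sub_rf hR (hZpsd t) K0)
  have hZbound : ∀ x : Fin q → ℝ, ∃ b, ∀ t, x ⬝ᵥ Z t *ᵥ x ≤ b := by
    intro x
    obtain ⟨κ, hκdef⟩ : ∃ κ', κ' = (c0 * c0 * ∑ a, ∑ b, |Γ0 a b|) * (∑ a, |x a|) ^ 2 :=
      ⟨_, rfl⟩
    have hΓsum : (0:ℝ) ≤ ∑ a, ∑ b, |Γ0 a b| :=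
      Finset.sum_nonneg fun a _ => Finset.sum_nonneg fun b _ => abs_nonneg _
    have hκ0 : 0 ≤ κ := by
      rw [hκdef]
      exact mul_nonneg (mul_nonneg (mul_nonneg hc0 hc0) hΓsum) (sq_nonneg _)
    have hρρ : ρ0 * ρ0 < 1 := by nlinarith
    have hρρ0 : 0 ≤ ρ0 * ρ0 := mul_nonneg hρ0 hρ0
    have hterm : ∀ j, x ⬝ᵥ (M0 ^ j * Γ0 * (M0 ^ j)ᵀ) *ᵥ x ≤ κ * (ρ0 * ρ0) ^ j := by
      intro j
      have hcj : (0:ℝ) ≤ c0 * ρ0 ^ j := mul_nonneg hc0 (pow_nonneg hρ0 j)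
      have hYent : ∀ a b, |(M0 ^ j * Γ0 * (M0 ^ j)ᵀ) a b|
          ≤ (c0 * ρ0 ^ j) * (c0 * ρ0 ^ j) * ∑ a, ∑ b, |Γ0 a b| :=
        fun a b => entry_triple_bound (M0 ^ j) Γ0 (M0 ^ j)
          (fun i j' => hb0 j i j') (fun i j' => hb0 j i j') hcj hcj a b
      have hq := quad_entry_bound (M0 ^ j * Γ0 * (M0 ^ j)ᵀ) x
        (mul_nonneg (mul_nonneg hcj hcj) hΓsum) hYent
      calc x ⬝ᵥ (M0 ^ j * Γ0 * (M0 ^ j)ᵀ) *ᵥ x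
          ≤ (c0 * ρ0 ^ j) * (c0 * ρ0 ^ j) * (∑ a, ∑ b, |Γ0 a b|) * (∑ a, |x a|) ^ 2 := hq
      _ = κ * (ρ0 * ρ0) ^ j := by rw [hκdef, mul_pow]; ring
    have hexp : ∀ t, x ⬝ᵥ Sg t *ᵥ x
        = ∑ j ∈ Finset.range t, x ⬝ᵥ (M0 ^ j * Γ0 * (M0 ^ j)ᵀ) *ᵥ x := by
      intro t
      induction t with
      | zero => rw [hSg0]; simp
      | succ t ih =>
        rw [hSgsucc t, Matrix.add_mulVec, dotProduct_add, ih, Finset.sum_range_succ]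
    refine ⟨κ * (1 / (1 - ρ0 * ρ0)), fun t => ?_⟩
    have hZSg : x ⬝ᵥ Z t *ᵥ x ≤ x ⬝ᵥ Sg t *ᵥ x := by
      have h := psd_quad_nonneg (hcomp t) x
      simp only [Matrix.sub_mulVec, dotProduct_sub] at h
      linarith
    have hsum : x ⬝ᵥ Sg t *ᵥ x ≤ κ * (1 / (1 - ρ0 * ρ0)) := by
      rw [hexp t]
      calc ∑ j ∈ Finset.range t, x ⬝ᵥ (M0 ^ j * Γ0 * (M0 ^ j)ᵀ) *ᵥ x
          ≤ ∑ j ∈ Finset.range t, κ * (ρ0 * ρ0) ^ j :=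
            Finset.sum_le_sum fun j _ => hterm j
      _ = κ * ∑ j ∈ Finset.range t, (ρ0 * ρ0) ^ j := by rw [Finset.mul_sum]
      _ ≤ κ * (1 / (1 - ρ0 * ρ0)) :=
        mul_le_mul_of_nonneg_left (geom_partial_le hρρ0 hρρ t) hκ0
    linarith
  -- limit of the zero-initialized sequence
  obtain ⟨Pinf, hPinfT⟩ := tendsto_of_monotone_bounded hZsym hZmono hZbound
  have hPinfPsd : Pinf.PosSemidef := psd_of_tendsto hPinfT hZpsd
  have hPinfSym : Pinfᵀ = Pinf := herm_transpose hPinfPsd.isHermitian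
  have hARE : Pinf = rf A C G Q S R Pinf := by
    have h1 : Tendsto (fun t => Z (t + 1)) atTop (𝓝 Pinf) :=
      hPinfT.comp (tendsto_add_atTop_nat 1)
    have h2 : Tendsto (fun t => rf A C G Q S R (Z t)) atTop (𝓝 (rf A C G Q S R Pinf)) :=
      (rf_continuousAt (rT_isUnit_det hR hPinfPsd)).tendsto.comp hPinfT
    have h3 : Tendsto (fun t => rf A C G Q S R (Z t)) atTop (𝓝 Pinf) :=
      h1.congr fun t => hZrec t
    exact tendsto_nhds_unique h3 h2
  have hstabilizing := solution_stabilizing hR hBhalf hstab hPinfPsd hARE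
  obtain ⟨Fb, hFb⟩ : ∃ F', F' = A - rL A C G S R Pinf * C := ⟨_, rfl⟩
  have hFbstable : ∀ z ∈ spectrum ℂ (Fb.map (Complex.ofReal : ℝ → ℂ)), ‖z‖ < 1 := by
    rw [hFb]; exact hstabilizing
  -- upper sequence
  set U : ℕ → Matrix (Fin q) (Fin q) ℝ := fun t => (rf A C G Q S R)^[t] (P 0 + Pinf) with hUdef
  have hU0 : U 0 = P 0 + Pinf := rfl
  have hUrec : ∀ t, U (t + 1) = rf A C G Q S R (U t) := fun t =>
    Function.iterate_succ_apply' _ _ _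
  have hUpsd : ∀ t, (U t).PosSemidef := by
    intro t
    induction t with
    | zero => exact hP0.add hPinfPsd
    | succ t ih => rw [hUrec t]; exact rf_posSemidef hR hBhalf ih
  have hUsym : ∀ t, (U t)ᵀ = U t := fun t => herm_transpose (hUpsd t).isHermitian
  have hUge : ∀ t, (U t - Pinf).PosSemidef := by
    intro t
    induction t with
    | zero =>
      rw [hU0, add_sub_cancel_right]
      exact hP0
    | succ t ih =>
      rw [hUrec t]
      have e : rf A C G Q S R (U t) - Pinf
          = rf A C G Q S R (U t) - rf A C G Q S R Pinf := by rw [← hARE]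
      rw [e]
      exact rf_mono hR hPinfPsd (hUpsd t) ih
  have hUleF : ∀ t, (Fb ^ t * P 0 * (Fb ^ t)ᵀ - (U t - Pinf)).PosSemidef := by
    intro t
    induction t with
    | zero =>
      rw [pow_zero, Matrix.one_mul, Matrix.transpose_one, Matrix.mul_one, hU0,
        add_sub_cancel_right, sub_self]
      exact .zero
    | succ t ih =>
      have hψ : (rg A C G Q S R (U t) (rL A C G S R Pinf)
          - rf A C G Q S R (U t)).PosSemidef := rg_sub_rf hR (hUpsd t) _
      have e2 : rg A C G Q S R (U t) (rL A C G S R Pinf)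
          - rg A C G Q S R Pinf (rL A C G S R Pinf) = Fb * (U t - Pinf) * Fbᵀ := by
        rw [hFb]
        exact rg_diff _ _ _
      have e3 : rf A C G Q S R Pinf = rg A C G Q S R Pinf (rL A C G S R Pinf) :=
        rf_eq_rg hR hPinfPsd
      have e1 : U (t + 1) - Pinf = Fb * (U t - Pinf) * Fbᵀ
          - (rg A C G Q S R (U t) (rL A C G S R Pinf) - rf A C G Q S R (U t)) := by
        rw [hUrec t]
        calc rf A C G Q S R (U t) - Pinf
            = rf A C G Q S R (U t) - rf A C G Q S R Pinf := by rw [← hARE]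
        _ = rf A C G Q S R (U t) - rg A C G Q S R Pinf (rL A C G S R Pinf) := by rw [← e3]
        _ = (rg A C G Q S R (U t) (rL A C G S R Pinf)
              - rg A C G Q S R Pinf (rL A C G S R Pinf))
            - (rg A C G Q S R (U t) (rL A C G S R Pinf) - rf A C G Q S R (U t)) := by abel
        _ = Fb * (U t - Pinf) * Fbᵀ
            - (rg A C G Q S R (U t) (rL A C G S R Pinf) - rf A C G Q S R (U t)) := by rw [e2]
      have heq : Fb ^ (t + 1) * P 0 * (Fb ^ (t + 1))ᵀ - (U (t + 1) - Pinf)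
          = Fb * (Fb ^ t * P 0 * (Fb ^ t)ᵀ - (U t - Pinf)) * Fbᵀ
            + (rg A C G Q S R (U t) (rL A C G S R Pinf) - rf A C G Q S R (U t)) := by
        rw [e1, pow_succ']
        simp only [Matrix.transpose_mul, Matrix.mul_sub, Matrix.sub_mul, Matrix.mul_assoc]
        abel
      rw [heq]
      exact (psd_conj ih Fb).add hψ
  have hFbP0 : Tendsto (fun t => Fb ^ t * P 0 * (Fb ^ t)ᵀ) atTop
      (𝓝 (0 : Matrix (Fin q) (Fin q) ℝ)) := pow_tendsto_conj_zero hFbstable (P 0)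
  have hBt : Tendsto (fun t => Pinf + Fb ^ t * P 0 * (Fb ^ t)ᵀ) atTop (𝓝 Pinf) := by
    have h0 : Tendsto (fun _ : ℕ => Pinf) atTop (𝓝 Pinf) := tendsto_const_nhds
    have := h0.add hFbP0
    simpa using this
  have hUto : Tendsto U atTop (𝓝 Pinf) := by
    refine tendsto_squeeze hUsym hPinfSym (A := fun _ => Pinf)
      (B := fun t => Pinf + Fb ^ t * P 0 * (Fb ^ t)ᵀ) (fun t => hUge t) (fun t => ?_)
      tendsto_const_nhds hBt
    have e : Pinf + Fb ^ t * P 0 * (Fb ^ t)ᵀ - U t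
        = Fb ^ t * P 0 * (Fb ^ t)ᵀ - (U t - Pinf) := by abel
    rw [e]
    exact hUleF t
  -- squeeze the given sequence between Z and U
  have hZP : ∀ t, (P t - Z t).PosSemidef := by
    intro t
    induction t with
    | zero => rw [hZ0, sub_zero]; exact hP0
    | succ t ih =>
      rw [hPrec' t, hZrec t]
      exact rf_mono hR (hZpsd t) (hPpsd t) ih
  have hPU : ∀ t, (U t - P t).PosSemidef := by
    intro t
    induction t with
    | zero => rw [hU0, add_sub_cancel_left]; exact hPinfPsd
    | succ t ih =>
      rw [hPrec' t, hUrec t]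
      exact rf_mono hR (hPpsd t) (hUpsd t) ih
  have hPto : Tendsto P atTop (𝓝 Pinf) :=
    tendsto_squeeze hPsym hPinfSym (A := Z) (B := U) hZP hPU hPinfT hUto
  refine ⟨Pinf, hPinfPsd, hARE, ?_, hstabilizing, hPto⟩
  intro P' hP'psd hP'eq
  exact are_unique hR hBhalf hstab hP'psd hPinfPsd hP'eq hARE
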